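/- The set Γ = {U ∈ ℂ²ˣ² : Uᵀ = U, U*U = I} of symmetric unitary 2×2 matrices coincides with the image of the map (X, z) ↦ zX from {X ∈ ℍ : Xᵀ = X, N(X) = 1} × {z ∈ ℂ : |z| = 1}, and this map is 2-to-1 onto Γ, with (X, z) and (-X, -z) having the same image. -/

import Mathlib

open Complex in
/-- `X` is a symmetric real quaternion, realized as the `2×2` complex matrix
`x⁰e₀ + x¹e₁ + x³e₃ = ((x⁰ - ix³, -ix¹), (-ix¹, x⁰ + ix³))` with `x⁰, x¹, x³ ∈ ℝ`. -/
def IsSymRealQuat (X : Matrix (Fin 2) (Fin 2) ℂ) : Prop :=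
  ∃ x0 x1 x3 : ℝ,
    X = !![(x0 : ℂ) - I * x3, -(I * x1); -(I * x1), (x0 : ℂ) + I * x3]

open Complex Matrix in
lemma quat_det_aux (x0 x1 x3 : ℝ) :
    (!![(x0 : ℂ) - I * x3, -(I * x1); -(I * x1), (x0 : ℂ) + I * x3]).det
      = ((x0^2 + x1^2 + x3^2 : ℝ) : ℂ) := by
  simp [Matrix.det_fin_two_of]
  linear_combination (-((x1:ℂ)^2+(x3:ℂ)^2)) * Complex.I_sq

open Complex Matrix in
lemma quat_unitary_aux (x0 x1 x3 : ℝ) (h' : ((x0:ℂ)^2 + x1^2 + x3^2) = 1) :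
    (!![(x0 : ℂ) - I * x3, -(I * x1); -(I * x1), (x0 : ℂ) + I * x3]).conjTranspose *
      !![(x0 : ℂ) - I * x3, -(I * x1); -(I * x1), (x0 : ℂ) + I * x3] = 1 := by
  ext i j
  fin_cases i <;> fin_cases j <;>
    simp [Matrix.mul_apply, Fin.sum_univ_two, Matrix.conjTranspose_apply, Matrix.one_apply,
      map_sub, map_add, _root_.map_mul, Complex.conj_I, Complex.conj_ofReal] <;>
    first
      | linear_combination h' - ((x1:ℂ)^2+(x3:ℂ)^2) * Complex.I_sq
      | ring1

open Complex Matrix in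
lemma sym_unitary_decomp (U : Matrix (Fin 2) (Fin 2) ℂ) (hsym : U.transpose = U)
    (huni : U.conjTranspose * U = 1) :
    ∃ (X : Matrix (Fin 2) (Fin 2) ℂ) (z : ℂ),
      IsSymRealQuat X ∧ X.det = 1 ∧ ‖z‖ = 1 ∧ U = z • X := by
  have hdet1 : (starRingEnd ℂ) U.det * U.det = 1 := by
    have := congrArg Matrix.det huni
    simpa [Matrix.det_mul, Matrix.det_conjTranspose] using this
  have habsdet : ‖U.det‖ = 1 := by
    have hn : Complex.normSq U.det = 1 := by
      have : ((Complex.normSq U.det : ℝ) : ℂ) = 1 := by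
        rw [Complex.normSq_eq_conj_mul_self]; exact hdet1
      exact_mod_cast this
    rw [← Complex.sq_norm] at hn
    nlinarith [norm_nonneg U.det]
  obtain ⟨z, hz⟩ := IsAlgClosed.exists_pow_nat_eq U.det two_pos
  have habsz : ‖z‖ = 1 := by
    have : ‖z‖ ^ 2 = 1 := by
      rw [← norm_pow, hz, habsdet]
    nlinarith [norm_nonneg z]
  have hz0 : z ≠ 0 := by
    intro h; rw [h] at habsz; simp at habsz
  set X : Matrix (Fin 2) (Fin 2) ℂ := z⁻¹ • U with hX
  have hU : U = z • X := by rw [hX, smul_inv_smul₀ hz0]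
  have hXdet : X.det = 1 := by
    rw [hX, Matrix.det_smul, ← hz]
    simp [Fintype.card_fin]
    field_simp
  have hXsym : X.transpose = X := by rw [hX, Matrix.transpose_smul, hsym]
  have hnz : ((Complex.normSq z : ℝ) : ℂ) = 1 := by
    rw [← Complex.sq_norm, habsz]; norm_num
  have hXuni : X.conjTranspose * X = 1 := by
    rw [hX, Matrix.conjTranspose_smul, Matrix.smul_mul, Matrix.mul_smul, huni]
    rw [smul_smul]
    have hc : (starRingEnd ℂ) z * z = 1 := by
      rw [← Complex.normSq_eq_conj_mul_self]; exact hnz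
    have hcz : star z⁻¹ * z⁻¹ = (1:ℂ) := by
      rw [Complex.star_def, map_inv₀, ← mul_inv, hc, inv_one]
    rw [hcz, one_smul]
  have hadj : X.conjTranspose = X.adjugate := by
    calc X.conjTranspose = X.conjTranspose * (X * X.adjugate) := by
          rw [Matrix.mul_adjugate, hXdet, one_smul, mul_one]
      _ = (X.conjTranspose * X) * X.adjugate := by rw [Matrix.mul_assoc]
      _ = X.adjugate := by rw [hXuni, one_mul]
  have h00 : (starRingEnd ℂ) (X 0 0) = X 1 1 := by
    have := congrFun (congrFun hadj 0) 0
    simpa [Matrix.adjugate_fin_two, Matrix.conjTranspose_apply] using this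
  have hX10 : X 1 0 = X 0 1 := by
    have := congrFun (congrFun hXsym 0) 1
    simpa [Matrix.transpose_apply] using this
  have h01 : (starRingEnd ℂ) (X 0 1) = -(X 0 1) := by
    have := congrFun (congrFun hadj 1) 0
    simp [Matrix.adjugate_fin_two, Matrix.conjTranspose_apply] at this
    rw [this, hX10]
  have hre : (X 0 1).re = 0 := by
    have := congrArg Complex.re h01
    simp at this; linarith
  refine ⟨X, z, ⟨(X 0 0).re, -(X 0 1).im, -(X 0 0).im, ?_⟩, hXdet, habsz, hU⟩
  ext i j
  fin_cases i <;> fin_cases j <;> simp [Matrix.of_apply]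
  · apply Complex.ext <;> simp
  · apply Complex.ext <;> simp [hre]
  · rw [hX10]; apply Complex.ext <;> simp [hre]
  · rw [← h00]; apply Complex.ext <;> simp

open Complex in
/-- The set `Γ` of symmetric unitary `2×2` matrices coincides with the image of
`(X, z) ↦ z • X` from `{X ∈ ℍ : Xᵀ = X, N(X) = 1} × {z ∈ ℂ : |z| = 1}`, and this map is
2-to-1: `(X, z)` and `(-X, -z)` (and only they) have the same image. -/
theorem symmetric_unitary_double_cover :
    (∀ U : Matrix (Fin 2) (Fin 2) ℂ,
      (U.transpose = U ∧ U.conjTranspose * U = 1) ↔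
        ∃ (X : Matrix (Fin 2) (Fin 2) ℂ) (z : ℂ),
          IsSymRealQuat X ∧ X.det = 1 ∧ ‖z‖ = 1 ∧ U = z • X) ∧
    (∀ (X X' : Matrix (Fin 2) (Fin 2) ℂ) (z z' : ℂ),
      IsSymRealQuat X → X.det = 1 → ‖z‖ = 1 →
      IsSymRealQuat X' → X'.det = 1 → ‖z'‖ = 1 →
      (z • X = z' • X' ↔ (X' = X ∧ z' = z) ∨ (X' = -X ∧ z' = -z))) := by
  constructor
  · intro U
    constructor
    · rintro ⟨hsym, huni⟩
      exact sym_unitary_decomp U hsym huni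
    · rintro ⟨X, z, ⟨x0, x1, x3, rfl⟩, hdet, habs, rfl⟩
      have hnz : ((Complex.normSq z : ℝ) : ℂ) = 1 := by
        rw [← Complex.sq_norm, habs]; norm_num
      have h' : ((x0:ℂ)^2 + x1^2 + x3^2) = 1 := by
        rw [← hdet, quat_det_aux]; push_cast; ring
      constructor
      · rw [Matrix.transpose_smul]
        congr 1
        ext i j
        fin_cases i <;> fin_cases j <;> simp
      · rw [Matrix.conjTranspose_smul, Matrix.smul_mul, Matrix.mul_smul,
          quat_unitary_aux x0 x1 x3 h', smul_smul]
        have hc : (starRingEnd ℂ) z * z = 1 := by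
          rw [← Complex.normSq_eq_conj_mul_self]; exact hnz
        rw [Complex.star_def, hc, one_smul]
  · intro X X' z z' _ hd hz _ hd' hz'
    have hz0 : z ≠ 0 := by intro h; rw [h] at hz; simp at hz
    constructor
    · intro h
      have hdet2 : z ^ 2 = z' ^ 2 := by
        have := congrArg Matrix.det h
        simpa [Matrix.det_smul, hd, hd', Fintype.card_fin] using this
      have hfac : (z - z') * (z + z') = 0 := by linear_combination hdet2
      rcases mul_eq_zero.mp hfac with h1 | h1
      · have hzz : z' = z := by linear_combination -h1
        left
        refine ⟨?_, hzz⟩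
        rw [hzz] at h
        exact (smul_right_injective _ hz0 h).symm
      · have hzz : z' = -z := by linear_combination h1
        right
        refine ⟨?_, hzz⟩
        rw [hzz, neg_smul, ← smul_neg] at h
        have := smul_right_injective (Matrix (Fin 2) (Fin 2) ℂ) hz0 h
        rw [this]; simp
    · rintro (⟨rfl, rfl⟩ | ⟨rfl, rfl⟩)
      · rfl
      · simp
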